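/- For probability measures μ, ν on R with finite first moments, W_1(μ,ν) = ∫_0^1 |Q_μ(u) − Q_ν(u)| du, where Q_μ, Q_ν are the generalized quantile functions of μ and ν. -/

import Mathlib

open MeasureTheory Set

/-- Generalized quantile (inverse CDF): `Q_F(u) = inf {x | F x ≥ u}`. -/
noncomputable def quantile (F : ℝ → ℝ) (u : ℝ) : ℝ := sInf {x | u ≤ F x}

/-- CDF of a real random variable `X` under `P`. -/
noncomputable def cdfRV {Ω : Type*} [MeasurableSpace Ω] (P : Measure Ω) (X : Ω → ℝ) (x : ℝ) : ℝ :=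
  (P {ω | X ω ≤ x}).toReal

/-- CDF of a measure on ℝ. -/
noncomputable def cdfOf (μ : Measure ℝ) (x : ℝ) : ℝ := (μ (Iic x)).toReal

/-- Uniform distribution on (0,1). -/
noncomputable def unif : Measure ℝ := volume.restrict (Ioo 0 1)

open Filter Topology ProbabilityTheory

lemma cdfOf_eq (μ : Measure ℝ) [IsProbabilityMeasure μ] : cdfOf μ = ⇑(cdf μ) := by
  funext x; rw [cdfOf, cdf_eq_real, measureReal_def]

lemma quantile_le_iff (μ : Measure ℝ) [IsProbabilityMeasure μ] {u : ℝ} (h0 : 0 < u) (h1 : u < 1)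
    (t : ℝ) : quantile (cdfOf μ) u ≤ t ↔ u ≤ cdfOf μ t := by
  rw [cdfOf_eq, quantile]
  set S := {x | u ≤ cdf μ x} with hS
  have hne : S.Nonempty := by
    rcases ((tendsto_cdf_atTop μ).eventually (eventually_gt_nhds h1)).exists with ⟨x, hx⟩
    exact ⟨x, hx.le⟩
  have hbd : BddBelow S := by
    rcases ((tendsto_cdf_atBot μ).eventually (eventually_lt_nhds h0)).exists with ⟨x, hx⟩
    exact ⟨x, fun s hs => le_of_not_gt fun hlt =>
      absurd (hs.trans ((monotone_cdf μ) hlt.le)) (not_le.2 hx)⟩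
  have hmem : sInf S ∈ S := by
    have hev : ∀ x ∈ Ioi (sInf S), u ≤ cdf μ x := fun x hx => by
      obtain ⟨s, hsS, hsx⟩ := (csInf_lt_iff hbd hne).1 hx
      exact hsS.trans (monotone_cdf μ hsx.le)
    have h2 : Tendsto (cdf μ) (𝓝[>] (sInf S)) (𝓝 (cdf μ (sInf S))) :=
      ((cdf μ).right_continuous _).tendsto.mono_left (nhdsWithin_mono _ Ioi_subset_Ici_self)
    exact ge_of_tendsto h2 (eventually_nhdsWithin_of_forall hev)
  constructor
  · exact fun h => hmem.trans (monotone_cdf μ h)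
  · exact fun h => csInf_le hbd h

lemma cdfOf_nonneg (μ : Measure ℝ) [IsProbabilityMeasure μ] (x : ℝ) : 0 ≤ cdfOf μ x := by
  rw [cdfOf_eq]; exact cdf_nonneg μ x

lemma cdfOf_le_one (μ : Measure ℝ) [IsProbabilityMeasure μ] (x : ℝ) : cdfOf μ x ≤ 1 := by
  rw [cdfOf_eq]; exact cdf_le_one μ x

instance : IsProbabilityMeasure unif := by
  constructor
  rw [unif, Measure.restrict_apply MeasurableSet.univ, univ_inter, Real.volume_Ioo]
  norm_num

lemma vol_inter_Iic {a : ℝ} (ha : 0 ≤ a) (ha1 : a ≤ 1) :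
    volume (Ioo (0:ℝ) 1 ∩ Iic a) = ENNReal.ofReal a := by
  apply le_antisymm
  · have h : Ioo (0:ℝ) 1 ∩ Iic a ⊆ Ioc 0 a := fun u hu => ⟨hu.1.1, hu.2⟩
    calc volume (Ioo (0:ℝ) 1 ∩ Iic a) ≤ volume (Ioc 0 a) := measure_mono h
      _ = ENNReal.ofReal a := by rw [Real.volume_Ioc, sub_zero]
  · have h : Ioo (0:ℝ) a ⊆ Ioo (0:ℝ) 1 ∩ Iic a :=
      fun u hu => ⟨⟨hu.1, lt_of_lt_of_le hu.2 ha1⟩, hu.2.le⟩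
    calc ENNReal.ofReal a = volume (Ioo (0:ℝ) a) := by rw [Real.volume_Ioo, sub_zero]
      _ ≤ _ := measure_mono h

lemma vol_inter_Ioc {a b : ℝ} (hb : 0 ≤ b) (ha1 : a ≤ 1) :
    volume (Ioo (0:ℝ) 1 ∩ Ioc b a) = ENNReal.ofReal (a - b) := by
  apply le_antisymm
  · calc volume (Ioo (0:ℝ) 1 ∩ Ioc b a) ≤ volume (Ioc b a) := measure_mono inter_subset_right
      _ = ENNReal.ofReal (a - b) := Real.volume_Ioc
  · have h : Ioo b a ⊆ Ioo (0:ℝ) 1 ∩ Ioc b a :=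
      fun u hu => ⟨⟨lt_of_le_of_lt hb hu.1, lt_of_lt_of_le hu.2 ha1⟩, hu.1, hu.2.le⟩
    calc ENNReal.ofReal (a - b) = volume (Ioo b a) := Real.volume_Ioo.symm
      _ ≤ _ := measure_mono h

lemma ofReal_add_ofReal_neg (a b : ℝ) :
    ENNReal.ofReal (a - b) + ENNReal.ofReal (b - a) = ENNReal.ofReal |a - b| := by
  rcases le_total a b with h | h
  · rw [ENNReal.ofReal_of_nonpos (by linarith), zero_add, abs_of_nonpos (by linarith), neg_sub]
  · rw [show ENNReal.ofReal (b-a) = 0 from ENNReal.ofReal_of_nonpos (by linarith), add_zero, abs_of_nonneg (by linarith)]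

lemma vol_Ico_union (x y : ℝ) : volume (Ico x y ∪ Ico y x) = ENNReal.ofReal |x - y| := by
  have hd : Disjoint (Ico x y) (Ico y x) := by
    rw [Set.disjoint_left]; rintro u ⟨h1, h2⟩ ⟨h3, h4⟩; linarith
  rw [measure_union hd measurableSet_Ico, Real.volume_Ico, Real.volume_Ico]
  rw [show |x - y| = |y - x| from abs_sub_comm x y]
  exact ofReal_add_ofReal_neg y x

lemma key_fubini {α : Type*} [MeasurableSpace α] (m : Measure α) [SigmaFinite m]
    {f g : α → ℝ} (hf : Measurable f) (hg : Measurable g) :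
    ∫⁻ a, ENNReal.ofReal |f a - g a| ∂m
      = ∫⁻ t, m {a | (f a ≤ t ∧ t < g a) ∨ (g a ≤ t ∧ t < f a)} ∂volume := by
  set S : Set (α × ℝ) :=
    {q | (f q.1 ≤ q.2 ∧ q.2 < g q.1) ∨ (g q.1 ≤ q.2 ∧ q.2 < f q.1)} with hSdef
  have hS : MeasurableSet S := by
    apply MeasurableSet.union
    · exact (measurableSet_le (hf.comp measurable_fst) measurable_snd).inter
        (measurableSet_lt measurable_snd (hg.comp measurable_fst))
    · exact (measurableSet_le (hg.comp measurable_fst) measurable_snd).inter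
        (measurableSet_lt measurable_snd (hf.comp measurable_fst))
  have h1 : ∫⁻ a, ENNReal.ofReal |f a - g a| ∂m = (m.prod volume) S := by
    rw [Measure.prod_apply hS]
    refine lintegral_congr fun a => ?_
    have : Prod.mk a ⁻¹' S = Ico (f a) (g a) ∪ Ico (g a) (f a) := by
      ext t
      simp only [hSdef, mem_preimage, mem_setOf_eq, mem_union, mem_Ico]
    rw [this, vol_Ico_union]
  have h2 : (m.prod volume) S = (volume.prod m) (Prod.swap ⁻¹' S) := by
    rw [← Measure.prod_swap, Measure.map_apply measurable_swap hS]
  rw [h1, h2, Measure.prod_apply (measurable_swap hS)]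
  exact lintegral_congr fun t => rfl

lemma abs_toReal_le {γ : Type*} [MeasurableSpace γ] (π : Measure γ) [IsFiniteMeasure π]
    {A B : Set γ} :
    ENNReal.ofReal |(π A).toReal - (π B).toReal| ≤ π ((A \ B) ∪ (B \ A)) := by
  have key : ∀ C D : Set γ, ENNReal.ofReal ((π C).toReal - (π D).toReal) ≤ π ((C \ D) ∪ (D \ C)) := by
    intro C D
    have h1 : π C ≤ π (C ∩ D) + π (C \ D) := measure_le_inter_add_diff π C D
    have h2 : π (C ∩ D) ≤ π D := measure_mono inter_subset_right
    have h3 : π C ≤ π D + π (C \ D) := h1.trans (add_le_add_left h2 _)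
    have h4 : (π C).toReal - (π D).toReal ≤ (π (C \ D)).toReal := by
      have := ENNReal.toReal_mono (by finiteness) h3
      rw [ENNReal.toReal_add (by finiteness) (by finiteness)] at this
      linarith
    calc ENNReal.ofReal ((π C).toReal - (π D).toReal) ≤ ENNReal.ofReal (π (C \ D)).toReal :=
          ENNReal.ofReal_le_ofReal h4
      _ = π (C \ D) := ENNReal.ofReal_toReal (by finiteness)
      _ ≤ _ := measure_mono subset_union_left
  rcases abs_cases ((π A).toReal - (π B).toReal) with ⟨h, _⟩ | ⟨h, _⟩
  · rw [h]; exact key A B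
  · rw [h, neg_sub]
    exact (key B A).trans (le_of_eq (by rw [union_comm]))

noncomputable def qext (μ : Measure ℝ) : ℝ → ℝ :=
  (Ioo (0:ℝ) 1).piecewise (quantile (cdfOf μ)) 0

lemma qext_agree (μ : Measure ℝ) {u : ℝ} (hu : u ∈ Ioo (0:ℝ) 1) :
    qext μ u = quantile (cdfOf μ) u := piecewise_eq_of_mem _ _ _ hu

lemma qext_preimage (μ : Measure ℝ) [IsProbabilityMeasure μ] (t : ℝ) :
    qext μ ⁻¹' Iic t
      = (Ioo (0:ℝ) 1 ∩ Iic (cdfOf μ t)) ∪ ((Ioo (0:ℝ) 1)ᶜ ∩ {u : ℝ | (0:ℝ) ≤ t}) := by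
  ext u
  by_cases h : u ∈ Ioo (0:ℝ) 1
  · simp only [mem_preimage, qext, piecewise_eq_of_mem _ _ _ h, mem_Iic, mem_union,
      mem_inter_iff, mem_compl_iff, h, not_true_eq_false, false_and, or_false, true_and,
      mem_setOf_eq]
    rw [← mem_Iic, ← mem_Iic]
    exact (quantile_le_iff μ h.1 h.2 t)
  · simp only [mem_preimage, qext, piecewise_eq_of_notMem _ _ _ h, mem_Iic, mem_union,
      mem_inter_iff, mem_compl_iff, h, not_false_eq_true, true_and, false_and, false_or,
      mem_setOf_eq, Pi.zero_apply]

lemma qext_measurable (μ : Measure ℝ) [IsProbabilityMeasure μ] : Measurable (qext μ) := by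
  apply measurable_of_Iic
  intro t
  rw [qext_preimage]
  exact (measurableSet_Ioo.inter measurableSet_Iic).union
    (measurableSet_Ioo.compl.inter (by by_cases h : (0:ℝ) ≤ t <;> simp [h]))

lemma map_qext (μ : Measure ℝ) [IsProbabilityMeasure μ] : Measure.map (qext μ) unif = μ := by
  have hm := qext_measurable μ
  have : IsProbabilityMeasure (Measure.map (qext μ) unif) :=
    Measure.isProbabilityMeasure_map hm.aemeasurable
  refine Measure.ext_of_Iic _ _ fun t => ?_
  rw [Measure.map_apply hm measurableSet_Iic, qext_preimage, unif,
    Measure.restrict_apply' measurableSet_Ioo]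
  have hset : ((Ioo (0:ℝ) 1 ∩ Iic (cdfOf μ t)) ∪ ((Ioo (0:ℝ) 1)ᶜ ∩ {u : ℝ | (0:ℝ) ≤ t}))
      ∩ Ioo (0:ℝ) 1 = Ioo (0:ℝ) 1 ∩ Iic (cdfOf μ t) := by
    ext u
    constructor
    · rintro ⟨h1 | h2, hu⟩
      · exact h1
      · exact absurd hu h2.1
    · intro h; exact ⟨Or.inl h, h.1⟩
  rw [hset, vol_inter_Iic (cdfOf_nonneg μ t) (cdfOf_le_one μ t), cdfOf,
    ENNReal.ofReal_toReal (by finiteness)]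

lemma unif_symm (μ ν : Measure ℝ) [IsProbabilityMeasure μ] [IsProbabilityMeasure ν] (t : ℝ) :
    unif {u | (qext μ u ≤ t ∧ t < qext ν u) ∨ (qext ν u ≤ t ∧ t < qext μ u)}
      = ENNReal.ofReal |cdfOf μ t - cdfOf ν t| := by
  set a := cdfOf μ t with ha
  set b := cdfOf ν t with hb
  rw [unif, Measure.restrict_apply' measurableSet_Ioo]
  have key : ∀ u ∈ Ioo (0:ℝ) 1,
      (((qext μ u ≤ t ∧ t < qext ν u) ∨ (qext ν u ≤ t ∧ t < qext μ u))
        ↔ u ∈ Ioc b a ∪ Ioc a b) := by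
    intro u hu
    rw [qext_agree μ hu, qext_agree ν hu]
    have h1 := quantile_le_iff μ hu.1 hu.2 t
    have h2 := quantile_le_iff ν hu.1 hu.2 t
    simp only [mem_union, mem_Ioc]
    constructor
    · rintro (⟨hc, hd⟩ | ⟨hc, hd⟩)
      · exact Or.inl ⟨not_le.1 fun hle => not_le.2 hd (h2.2 hle), h1.1 hc⟩
      · exact Or.inr ⟨not_le.1 fun hle => not_le.2 hd (h1.2 hle), h2.1 hc⟩
    · rintro (⟨hc, hd⟩ | ⟨hc, hd⟩)
      · exact Or.inl ⟨h1.2 hd, not_le.1 fun hle => not_le.2 hc (h2.1 hle)⟩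
      · exact Or.inr ⟨h2.2 hd, not_le.1 fun hle => not_le.2 hc (h1.1 hle)⟩
  have hset : {u : ℝ | (qext μ u ≤ t ∧ t < qext ν u) ∨ (qext ν u ≤ t ∧ t < qext μ u)}
      ∩ Ioo (0:ℝ) 1 = (Ioo (0:ℝ) 1 ∩ Ioc b a) ∪ (Ioo (0:ℝ) 1 ∩ Ioc a b) := by
    rw [← inter_union_distrib_left]
    ext u
    constructor
    · rintro ⟨hc, hu⟩; exact ⟨hu, (key u hu).1 hc⟩
    · rintro ⟨hu, hc⟩; exact ⟨(key u hu).2 hc, hu⟩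
  rw [hset, measure_union ?_ (measurableSet_Ioo.inter measurableSet_Ioc),
    vol_inter_Ioc (cdfOf_nonneg ν t) (cdfOf_le_one μ t),
    vol_inter_Ioc (cdfOf_nonneg μ t) (cdfOf_le_one ν t), ofReal_add_ofReal_neg]
  rw [Set.disjoint_left]
  rintro u ⟨_, h1, h2⟩ ⟨_, h3, h4⟩
  linarith

/-- 1-Wasserstein distance on ℝ: infimum over couplings of the expected distance. -/
noncomputable def W1 (μ ν : Measure ℝ) : ENNReal :=
  ⨅ π ∈ {π : Measure (ℝ × ℝ) | π.map Prod.fst = μ ∧ π.map Prod.snd = ν},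
    ∫⁻ p, ENNReal.ofReal |p.1 - p.2| ∂π

theorem W1_eq_quantile_integral (μ ν : Measure ℝ)
    [IsProbabilityMeasure μ] [IsProbabilityMeasure ν]
    (hμ : Integrable id μ) (hν : Integrable id ν) :
    W1 μ ν = ENNReal.ofReal (∫ u in Ioo (0:ℝ) 1, |quantile (cdfOf μ) u - quantile (cdfOf ν) u|) := by
  have hmμ := qext_measurable μ
  have hmν := qext_measurable ν
  set A : ENNReal := ∫⁻ u, ENNReal.ofReal |qext μ u - qext ν u| ∂unif with hA
  have hAF : A = ∫⁻ t, ENNReal.ofReal |cdfOf μ t - cdfOf ν t| ∂volume := by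
    rw [hA, key_fubini unif hmμ hmν]
    exact lintegral_congr fun t => unif_symm μ ν t
  have hpair : Measurable fun u => (qext μ u, qext ν u) := hmμ.prodMk hmν
  set π₀ : Measure (ℝ × ℝ) := unif.map (fun u => (qext μ u, qext ν u)) with hπ₀
  have hfst : π₀.map Prod.fst = μ := by
    rw [hπ₀, Measure.map_map measurable_fst hpair]; exact map_qext μ
  have hsnd : π₀.map Prod.snd = ν := by
    rw [hπ₀, Measure.map_map measurable_snd hpair]; exact map_qext ν
  have hcost0 : ∫⁻ p, ENNReal.ofReal |p.1 - p.2| ∂π₀ = A := by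
    rw [hπ₀, lintegral_map (by fun_prop) hpair]
  have hub : W1 μ ν ≤ A := by
    rw [W1]
    exact le_trans (biInf_le _ ⟨hfst, hsnd⟩) (le_of_eq hcost0)
  have hlb : ∀ π : Measure (ℝ × ℝ), π.map Prod.fst = μ → π.map Prod.snd = ν →
      A ≤ ∫⁻ p, ENNReal.ofReal |p.1 - p.2| ∂π := by
    intro π hf hs
    have hπprob : IsProbabilityMeasure π := by
      constructor
      have h := congrArg (fun m : Measure ℝ => m univ) hf
      simp only [Measure.map_apply measurable_fst MeasurableSet.univ, preimage_univ] at h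
      rw [h]; exact measure_univ
    have hFμ : ∀ t, cdfOf μ t = (π {p : ℝ × ℝ | p.1 ≤ t}).toReal := fun t => by
      rw [cdfOf, ← hf, Measure.map_apply measurable_fst measurableSet_Iic]; rfl
    have hFν : ∀ t, cdfOf ν t = (π {p : ℝ × ℝ | p.2 ≤ t}).toReal := fun t => by
      rw [cdfOf, ← hs, Measure.map_apply measurable_snd measurableSet_Iic]; rfl
    rw [hAF, key_fubini π measurable_fst measurable_snd]
    refine lintegral_mono fun t => ?_
    rw [hFμ t, hFν t]
    refine le_trans (abs_toReal_le π) (le_of_eq ?_)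
    congr 1
    ext p
    simp only [mem_union, mem_diff, mem_setOf_eq, not_le]
  have hW : W1 μ ν = A := le_antisymm hub (le_iInf₂ fun π hπ => hlb π hπ.1 hπ.2)
  have hfin : A ≠ ⊤ := by
    have hμ' : ∫⁻ x, ENNReal.ofReal |x| ∂μ < ⊤ := by
      have h := hμ.hasFiniteIntegral
      rw [HasFiniteIntegral] at h
      refine lt_of_eq_of_lt (lintegral_congr fun x => ?_) h
      rw [← ofReal_norm, Real.norm_eq_abs]; rfl
    have hν' : ∫⁻ x, ENNReal.ofReal |x| ∂ν < ⊤ := by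
      have h := hν.hasFiniteIntegral
      rw [HasFiniteIntegral] at h
      refine lt_of_eq_of_lt (lintegral_congr fun x => ?_) h
      rw [← ofReal_norm, Real.norm_eq_abs]; rfl
    have h1 : ∫⁻ u, ENNReal.ofReal |qext μ u| ∂unif = ∫⁻ x, ENNReal.ofReal |x| ∂μ := by
      have h := lintegral_map (μ := unif) (f := fun x : ℝ => ENNReal.ofReal |x|)
        (by fun_prop) hmμ
      rw [map_qext μ] at h
      exact h.symm
    have h2 : ∫⁻ u, ENNReal.ofReal |qext ν u| ∂unif = ∫⁻ x, ENNReal.ofReal |x| ∂ν := by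
      have h := lintegral_map (μ := unif) (f := fun x : ℝ => ENNReal.ofReal |x|)
        (by fun_prop) hmν
      rw [map_qext ν] at h
      exact h.symm
    have hle : A ≤ (∫⁻ u, ENNReal.ofReal |qext μ u| ∂unif)
        + ∫⁻ u, ENNReal.ofReal |qext ν u| ∂unif := by
      rw [hA, ← lintegral_add_left (by fun_prop)]
      refine lintegral_mono fun u => ?_
      rw [← ENNReal.ofReal_add (abs_nonneg _) (abs_nonneg _)]
      exact ENNReal.ofReal_le_ofReal (abs_sub _ _)
    exact ne_top_of_le_ne_top (by rw [h1, h2]; exact (ENNReal.add_lt_top.2 ⟨hμ', hν'⟩).ne) hle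
  have hae : ∀ᵐ u ∂unif, |quantile (cdfOf μ) u - quantile (cdfOf ν) u|
      = |qext μ u - qext ν u| := by
    rw [unif]
    filter_upwards [ae_restrict_mem measurableSet_Ioo] with u hu
    rw [qext_agree μ hu, qext_agree ν hu]
  have hint : Integrable (fun u => |quantile (cdfOf μ) u - quantile (cdfOf ν) u|) unif := by
    refine Integrable.congr ?_ (hae.mono fun u h => h.symm)
    constructor
    · exact ((hmμ.sub hmν).abs).aestronglyMeasurable
    · rw [HasFiniteIntegral]
      refine lt_of_eq_of_lt (lintegral_congr fun u => ?_) hfin.lt_top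
      rw [← ofReal_norm, Real.norm_eq_abs, abs_abs]
  rw [hW, show (∫ u in Ioo (0:ℝ) 1, |quantile (cdfOf μ) u - quantile (cdfOf ν) u|)
      = ∫ u, |quantile (cdfOf μ) u - quantile (cdfOf ν) u| ∂unif from rfl,
    MeasureTheory.ofReal_integral_eq_lintegral_ofReal hint
      (Filter.Eventually.of_forall fun u => abs_nonneg _)]
  exact lintegral_congr_ae (hae.mono fun u h => congrArg ENNReal.ofReal h.symm)
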